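/- arXiv:1809.00606 — 9 statements merged into one kernel-verified Lean document; each statement's English description precedes it below -/
import Mathlib

section
/- Let (U, Δ, 𝒟) be a covering decision information system with Δ = (𝒞₁, …, 𝒞ₘ), let 𝒞ₘ⁺ be a refinement of 𝒞ₘ and Δ⁺ = (𝒞₁, …, 𝒞ₘ₋₁, 𝒞ₘ⁺). Assume ⋃𝒜_{𝒞ₘ} ⊆ ⋃𝒜_{𝒞ₘ⁺}. Then for every x ∈ POS_{∪Δ⁺}(𝒟) \ POS_{∪Δ}(𝒟), the updated related set is r⁺(x) = {m}. (Claim established in the proof of Theorem 3.6.) -/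
open Set

/-- A covering of `U`: a family of nonempty subsets whose union is all of `U`. -/
def IsCovering {U : Type*} (𝒞 : Set (Set U)) : Prop :=
  (∀ C ∈ 𝒞, C.Nonempty) ∧ ⋃₀ 𝒞 = Set.univ

/-- A partition of `U`: a covering whose blocks are pairwise disjoint. -/
def IsPartitionC {U : Type*} (𝒟 : Set (Set U)) : Prop :=
  IsCovering 𝒟 ∧ ∀ D₁ ∈ 𝒟, ∀ D₂ ∈ 𝒟, D₁ ≠ D₂ → Disjoint D₁ D₂

/-- `𝒜_𝒞 = {C ∈ 𝒞 : ∃ D ∈ 𝒟, C ⊆ D}`: blocks of `𝒞` contained in some decision class. -/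
def goodBlocks {U : Type*} (𝒟 𝒞 : Set (Set U)) : Set (Set U) :=
  {C ∈ 𝒞 | ∃ D ∈ 𝒟, C ⊆ D}

/-- The related set `r(x)` of `x`: indices `i` such that some block of `𝒞ᵢ` contains `x`
and is contained in some decision class. -/
def relSet {U : Type*} {m : ℕ} (Δ : Fin m → Set (Set U)) (𝒟 : Set (Set U)) (x : U) :
    Set (Fin m) :=
  {i | ∃ C ∈ Δ i, x ∈ C ∧ ∃ D ∈ 𝒟, C ⊆ D}

/-- The positive region `POS_{∪Δ}(𝒟) = ⋃_{D ∈ 𝒟} ⋃ {K : K a block of some 𝒞ᵢ, K ⊆ D}`. -/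
def POS {U : Type*} {m : ℕ} (Δ : Fin m → Set (Set U)) (𝒟 : Set (Set U)) : Set U :=
  ⋃ D ∈ 𝒟, ⋃₀ {K | (∃ i, K ∈ Δ i) ∧ K ⊆ D}

/-- `𝒞'` refines `𝒞` (and `𝒞` coarsens `𝒞'`): every block of `𝒞'` is inside a block of `𝒞`. -/
def Refines {U : Type*} (𝒞' 𝒞 : Set (Set U)) : Prop :=
  ∀ C ∈ 𝒞', ∃ C₀ ∈ 𝒞, C ⊆ C₀

/-- `P` is a reduct of `(U, Δ, 𝒟)`: `P` meets `r(x)` for every `x` in the positive region,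
and no proper subset of `P` has this property. -/
def IsReduct {U : Type*} {m : ℕ} (Δ : Fin m → Set (Set U)) (𝒟 : Set (Set U))
    (P : Set (Fin m)) : Prop :=
  (∀ x ∈ POS Δ 𝒟, (P ∩ relSet Δ 𝒟 x).Nonempty) ∧
  ∀ Q : Set (Fin m), Q ⊂ P → ¬ (∀ x ∈ POS Δ 𝒟, (Q ∩ relSet Δ 𝒟 x).Nonempty)

/-- assuming `⋃𝒜_{𝒞ₘ} ⊆ ⋃𝒜_{𝒞ₘ⁺}`, for every
`x ∈ POS_{∪Δ⁺}(𝒟) \ POS_{∪Δ}(𝒟)` one has `r⁺(x) = {m}`. -/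
theorem stmt5 {U : Type*} [Finite U] [Nonempty U] {m : ℕ}
    (Δ : Fin (m + 1) → Set (Set U)) (𝒟 : Set (Set U))
    (hΔ : ∀ i, IsCovering (Δ i)) (h𝒟 : IsPartitionC 𝒟)
    (Cp : Set (Set U)) (hCp : IsCovering Cp)
    (href : Refines Cp (Δ (Fin.last m)))
    (Δp : Fin (m + 1) → Set (Set U))
    (hΔp : Δp = Function.update Δ (Fin.last m) Cp)
    (hmono : ⋃₀ goodBlocks 𝒟 (Δ (Fin.last m)) ⊆ ⋃₀ goodBlocks 𝒟 Cp)
    (x : U) (hx : x ∈ POS Δp 𝒟 \ POS Δ 𝒟) :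
    relSet Δp 𝒟 x = {Fin.last m} := by
  obtain ⟨hxp, hxn⟩ := hx
  have key : ∀ i : Fin (m+1), i ≠ Fin.last m → Δp i = Δ i := by
    intro i hi; rw [hΔp, Function.update_of_ne hi]
  ext i
  simp only [Set.mem_singleton_iff]
  constructor
  · intro hi
    by_contra hne
    simp only [relSet, Set.mem_setOf_eq] at hi
    obtain ⟨C, hCΔ, hxC, D, hD, hCD⟩ := hi
    rw [key i hne] at hCΔ
    refine hxn ?_
    simp only [POS, Set.mem_iUnion, Set.mem_sUnion]
    exact ⟨D, hD, C, ⟨⟨i, hCΔ⟩, hCD⟩, hxC⟩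
  · rintro rfl
    simp only [POS, Set.mem_iUnion, Set.mem_sUnion] at hxp
    obtain ⟨D, hD, K, ⟨⟨j, hKΔ⟩, hKD⟩, hxK⟩ := hxp
    by_cases hj : j = Fin.last m
    · subst hj
      exact Set.mem_setOf_eq ▸ ⟨K, hKΔ, hxK, D, hD, hKD⟩
    · rw [key j hj] at hKΔ
      refine absurd ?_ hxn
      simp only [POS, Set.mem_iUnion, Set.mem_sUnion]
      exact ⟨D, hD, K, ⟨⟨j, hKΔ⟩, hKD⟩, hxK⟩
end

section
/- Let (U, Δ, 𝒟) be a covering decision information system with Δ = (𝒞₁, …, 𝒞ₘ), let 𝒞ₘ⁺ be a refinement of 𝒞ₘ and Δ⁺ = (𝒞₁, …, 𝒞ₘ₋₁, 𝒞ₘ⁺). Assume ⋃𝒜_{𝒞ₘ} ⊆ ⋃𝒜_{𝒞ₘ⁺} and POS_{∪Δ⁺}(𝒟) ≠ POS_{∪Δ}(𝒟). Then every reduct P of (U, Δ⁺, 𝒟) contains the index m (i.e., contains 𝒞ₘ⁺). (Claim 𝓡₁(U,Δ⁺,𝒟) = ∅ in the proof of Theorem 3.6.) -/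
open Set

/-- assuming `⋃𝒜_{𝒞ₘ} ⊆ ⋃𝒜_{𝒞ₘ⁺}` and `POS_{∪Δ⁺}(𝒟) ≠ POS_{∪Δ}(𝒟)`,
every reduct of `(U, Δ⁺, 𝒟)` contains the index `m`. -/
theorem stmt6 {U : Type*} [Finite U] [Nonempty U] {m : ℕ}
    (Δ : Fin (m + 1) → Set (Set U)) (𝒟 : Set (Set U))
    (hΔ : ∀ i, IsCovering (Δ i)) (h𝒟 : IsPartitionC 𝒟)
    (Cp : Set (Set U)) (hCp : IsCovering Cp)
    (href : Refines Cp (Δ (Fin.last m)))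
    (Δp : Fin (m + 1) → Set (Set U))
    (hΔp : Δp = Function.update Δ (Fin.last m) Cp)
    (hmono : ⋃₀ goodBlocks 𝒟 (Δ (Fin.last m)) ⊆ ⋃₀ goodBlocks 𝒟 Cp)
    (hne : POS Δp 𝒟 ≠ POS Δ 𝒟) :
    ∀ P : Set (Fin (m + 1)), IsReduct Δp 𝒟 P → Fin.last m ∈ P := by
  -- POS Δ ⊆ POS Δp
  have hsub : POS Δ 𝒟 ⊆ POS Δp 𝒟 := by
    intro x hx
    simp only [POS, mem_iUnion, mem_sUnion] at hx ⊢
    obtain ⟨D, hD, K, ⟨⟨i, hKi⟩, hKD⟩, hxK⟩ := hx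
    by_cases hi : i = Fin.last m
    · have hK : x ∈ ⋃₀ goodBlocks 𝒟 (Δ (Fin.last m)) := ⟨K, ⟨hi ▸ hKi, D, hD, hKD⟩, hxK⟩
      obtain ⟨C, ⟨hC, D', hD', hCD'⟩, hxC⟩ := hmono hK
      exact ⟨D', hD', C, ⟨⟨Fin.last m, by simp [hΔp, hC]⟩, hCD'⟩, hxC⟩
    · exact ⟨D, hD, K, ⟨⟨i, by simp [hΔp, Function.update_of_ne hi, hKi]⟩, hKD⟩, hxK⟩
  intro P hP
  obtain ⟨x, hxp, hxn⟩ : ∃ x, x ∈ POS Δp 𝒟 ∧ x ∉ POS Δ 𝒟 := by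
    by_contra h
    push_neg at h
    exact hne (Subset.antisymm h hsub)
  obtain ⟨i, hiP, C, hC, hxC, D, hD, hCD⟩ := hP.1 x hxp
  by_cases hi : i = Fin.last m
  · exact hi ▸ hiP
  · exfalso
    apply hxn
    have : C ∈ Δ i := by
      have := hC; rwa [hΔp, Function.update_of_ne hi] at this
    exact mem_iUnion.mpr ⟨D, mem_iUnion.mpr ⟨hD, ⟨C, ⟨⟨i, this⟩, hCD⟩, hxC⟩⟩⟩
end

section
/- Let (U, Δ, 𝒟) be a covering decision information system with Δ = (𝒞₁, …, 𝒞ₘ), let 𝒞ₘ⁺ be a refinement of 𝒞ₘ and Δ⁺ = (𝒞₁, …, 𝒞ₘ₋₁, 𝒞ₘ⁺). Assume ⋃𝒜_{𝒞ₘ} ⊆ ⋃𝒜_{𝒞ₘ⁺} and POS_{∪Δ⁺}(𝒟) = POS_{∪Δ}(𝒟). Then for every P ⊆ {1,…,m} with m ∉ P: P is a reduct of (U, Δ⁺, 𝒟) if and only if P is a reduct of (U, Δ, 𝒟). (The ◊𝓡 part of Theorem 3.5.) -/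
open Set

/-- the ◊𝓡 part of Theorem 3.5: assuming `⋃𝒜_{𝒞ₘ} ⊆ ⋃𝒜_{𝒞ₘ⁺}` and
`POS_{∪Δ⁺}(𝒟) = POS_{∪Δ}(𝒟)`, for `P` with `m ∉ P`: `P` is a reduct of `(U, Δ⁺, 𝒟)`
iff `P` is a reduct of `(U, Δ, 𝒟)`. -/
theorem stmt7 {U : Type*} [Finite U] [Nonempty U] {m : ℕ}
    (Δ : Fin (m + 1) → Set (Set U)) (𝒟 : Set (Set U))
    (hΔ : ∀ i, IsCovering (Δ i)) (h𝒟 : IsPartitionC 𝒟)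
    (Cp : Set (Set U)) (hCp : IsCovering Cp)
    (href : Refines Cp (Δ (Fin.last m)))
    (Δp : Fin (m + 1) → Set (Set U))
    (hΔp : Δp = Function.update Δ (Fin.last m) Cp)
    (hmono : ⋃₀ goodBlocks 𝒟 (Δ (Fin.last m)) ⊆ ⋃₀ goodBlocks 𝒟 Cp)
    (hpos : POS Δp 𝒟 = POS Δ 𝒟) :
    ∀ P : Set (Fin (m + 1)), Fin.last m ∉ P →
      (IsReduct Δp 𝒟 P ↔ IsReduct Δ 𝒟 P) := by
  intro P hP
  have hrel : ∀ (Q : Set (Fin (m+1))), Fin.last m ∉ Q → ∀ x,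
      Q ∩ relSet Δp 𝒟 x = Q ∩ relSet Δ 𝒟 x := by
    intro Q hQ x
    ext i
    simp only [Set.mem_inter_iff, relSet, Set.mem_setOf_eq]
    constructor <;> rintro ⟨hiQ, h⟩ <;> refine ⟨hiQ, ?_⟩ <;>
      have hne : Δp i = Δ i := by
        rw [hΔp, Function.update_of_ne (fun h' : i = Fin.last m => hQ (h' ▸ hiQ))]
    · rwa [hne] at h
    · rwa [hne]
  constructor <;> rintro ⟨h1, h2⟩ <;> constructor
  · intro x hx
    rw [← hrel P hP x]
    exact h1 x (hpos ▸ hx)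
  · intro Q hQ hall
    exact h2 Q hQ (fun x hx =>
      (hrel Q (fun h => hP (hQ.1 h)) x) ▸ hall x (hpos ▸ hx))
  · intro x hx
    rw [hrel P hP x]
    exact h1 x (hpos ▸ hx)
  · intro Q hQ hall
    exact h2 Q hQ (fun x hx =>
      (hrel Q (fun h => hP (hQ.1 h)) x) ▸ hall x (hpos ▸ hx))
end

section
/- Let (U, Δ, 𝒟) be a covering decision information system with Δ = (𝒞₁, …, 𝒞ₘ), let 𝒞ₘ⁺ be a refinement of 𝒞ₘ and Δ⁺ = (𝒞₁, …, 𝒞ₘ₋₁, 𝒞ₘ⁺). Assume ⋃𝒜_{𝒞ₘ} ⊆ ⋃𝒜_{𝒞ₘ⁺} and POS_{∪Δ⁺}(𝒟) = POS_{∪Δ}(𝒟). Then for every P ⊆ {1,…,m} with m ∈ P: P is a reduct of (U, Δ⁺, 𝒟) if and only if (i) P is minimal among the sets Q ⊆ {1,…,m} with m ∈ Q such that Q ∩ r(x) ≠ ∅ for every x ∈ POS_{∪Δ}(𝒟) \ ⋃𝒜_{𝒞ₘ⁺}, and (ii) no reduct of (U, Δ, 𝒟) is a proper subset of P. (The ▲𝓡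 part of Theorem 3.5.) -/
open Set

lemma exists_reduct_subset {U : Type*} {m : ℕ} (Δ : Fin m → Set (Set U)) (𝒟 : Set (Set U))
    (Q : Set (Fin m)) (hQ : ∀ x ∈ POS Δ 𝒟, (Q ∩ relSet Δ 𝒟 x).Nonempty) :
    ∃ Q' ⊆ Q, IsReduct Δ 𝒟 Q' := by
  induction Q using WellFoundedLT.induction with
  | ind Q ih =>
    by_cases h : ∀ R : Set (Fin m), R ⊂ Q → ¬ (∀ x ∈ POS Δ 𝒟, (R ∩ relSet Δ 𝒟 x).Nonempty)
    · exact ⟨Q, subset_rfl, hQ, h⟩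
    · push_neg at h
      obtain ⟨R, hR, hRcov⟩ := h
      obtain ⟨Q', hQ', hred⟩ := ih R hR hRcov
      exact ⟨Q', hQ'.trans hR.subset, hred⟩

/-- the ▲𝓡 part of Theorem 3.5: assuming `⋃𝒜_{𝒞ₘ} ⊆ ⋃𝒜_{𝒞ₘ⁺}` and
`POS_{∪Δ⁺}(𝒟) = POS_{∪Δ}(𝒟)`, for `P` with `m ∈ P`: `P` is a reduct of `(U, Δ⁺, 𝒟)` iff
(i) `P` is minimal among `m`-containing sets `Q` with `Q ∩ r(x) ≠ ∅` for every
`x ∈ POS_{∪Δ}(𝒟) \ ⋃𝒜_{𝒞ₘ⁺}`, and (ii) no reduct of `(U, Δ, 𝒟)` is a proper subset of `P`. -/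
theorem stmt8 {U : Type*} [Finite U] [Nonempty U] {m : ℕ}
    (Δ : Fin (m + 1) → Set (Set U)) (𝒟 : Set (Set U))
    (hΔ : ∀ i, IsCovering (Δ i)) (h𝒟 : IsPartitionC 𝒟)
    (Cp : Set (Set U)) (hCp : IsCovering Cp)
    (href : Refines Cp (Δ (Fin.last m)))
    (Δp : Fin (m + 1) → Set (Set U))
    (hΔp : Δp = Function.update Δ (Fin.last m) Cp)
    (hmono : ⋃₀ goodBlocks 𝒟 (Δ (Fin.last m)) ⊆ ⋃₀ goodBlocks 𝒟 Cp)
    (hpos : POS Δp 𝒟 = POS Δ 𝒟) :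
    ∀ P : Set (Fin (m + 1)), Fin.last m ∈ P →
      (IsReduct Δp 𝒟 P ↔
        ((∀ x ∈ POS Δ 𝒟 \ ⋃₀ goodBlocks 𝒟 Cp, (P ∩ relSet Δ 𝒟 x).Nonempty) ∧
          (∀ Q : Set (Fin (m + 1)), Q ⊂ P →
            ¬ (Fin.last m ∈ Q ∧
                ∀ x ∈ POS Δ 𝒟 \ ⋃₀ goodBlocks 𝒟 Cp, (Q ∩ relSet Δ 𝒟 x).Nonempty)) ∧
          (∀ Q : Set (Fin (m + 1)), IsReduct Δ 𝒟 Q → ¬ Q ⊂ P))) := by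
  
  subst hΔp
  intro P hPlast
  set Δp := Function.update Δ (Fin.last m) Cp with hΔp
  have hΔpL : Δp (Fin.last m) = Cp := by rw [hΔp]; simp
  have hΔpi : ∀ i : Fin (m+1), i ≠ Fin.last m → Δp i = Δ i := by
    intro i hi; rw [hΔp]; exact Function.update_of_ne hi _ _
  have h1 : ∀ x : U, Fin.last m ∈ relSet Δp 𝒟 x ↔ x ∈ ⋃₀ goodBlocks 𝒟 Cp := by
    intro x
    simp only [relSet, mem_setOf_eq, hΔpL, goodBlocks, mem_sUnion, Set.mem_setOf_eq]
    tauto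
  have h2 : ∀ (x : U) (i : Fin (m+1)), i ≠ Fin.last m →
      (i ∈ relSet Δp 𝒟 x ↔ i ∈ relSet Δ 𝒟 x) := by
    intro x i hi
    simp only [relSet, mem_setOf_eq, hΔpi i hi]
  have h3 : ∀ x : U, relSet Δ 𝒟 x ⊆ relSet Δp 𝒟 x := by
    intro x i hi
    by_cases h : i = Fin.last m
    · subst h
      rw [h1]
      apply hmono
      simp only [relSet, mem_setOf_eq] at hi
      obtain ⟨C, hC, hxC, hD⟩ := hi
      exact ⟨C, ⟨hC, hD⟩, hxC⟩
    · exact (h2 x i h).mpr hi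
  have key : ∀ Q : Set (Fin (m+1)), Fin.last m ∈ Q →
      ((∀ x ∈ POS Δ 𝒟, (Q ∩ relSet Δp 𝒟 x).Nonempty) ↔
        (∀ x ∈ POS Δ 𝒟 \ ⋃₀ goodBlocks 𝒟 Cp, (Q ∩ relSet Δ 𝒟 x).Nonempty)) := by
    intro Q hQ
    constructor
    · intro h x hx
      obtain ⟨i, hiQ, hir⟩ := h x hx.1
      refine ⟨i, hiQ, ?_⟩
      have hine : i ≠ Fin.last m := by
        rintro rfl
        exact hx.2 ((h1 x).mp hir)
      exact (h2 x i hine).mp hir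
    · intro h x hx
      by_cases hxG : x ∈ ⋃₀ goodBlocks 𝒟 Cp
      · exact ⟨Fin.last m, hQ, (h1 x).mpr hxG⟩
      · obtain ⟨i, hiQ, hir⟩ := h x ⟨hx, hxG⟩
        exact ⟨i, hiQ, h3 x hir⟩
  constructor
  · rintro ⟨hcov, hmin⟩
    rw [hpos] at hcov
    simp only [hpos] at hmin
    refine ⟨(key P hPlast).mp hcov, ?_, ?_⟩
    · rintro Q hQP ⟨hQlast, hQcov⟩
      exact hmin Q hQP ((key Q hQlast).mpr hQcov)
    · rintro Q ⟨hQcov, -⟩ hQP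
      apply hmin Q hQP
      intro x hx
      obtain ⟨i, hiQ, hir⟩ := hQcov x hx
      exact ⟨i, hiQ, h3 x hir⟩
  · rintro ⟨hi, hii, hiii⟩
    constructor
    · rw [hpos]; exact (key P hPlast).mpr hi
    · intro Q hQP hQcov
      rw [hpos] at hQcov
      by_cases hQlast : Fin.last m ∈ Q
      · exact hii Q hQP ⟨hQlast, (key Q hQlast).mp hQcov⟩
      · have hQfull : ∀ x ∈ POS Δ 𝒟, (Q ∩ relSet Δ 𝒟 x).Nonempty := by
          intro x hx
          obtain ⟨i, hiQ, hir⟩ := hQcov x hx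
          have hne : i ≠ Fin.last m := fun h => hQlast (h ▸ hiQ)
          exact ⟨i, hiQ, (h2 x i hne).mp hir⟩
        obtain ⟨Q', hQ'Q, hQ'red⟩ := exists_reduct_subset Δ 𝒟 Q hQfull
        exact hiii Q' hQ'red (ssubset_of_subset_of_ssubset hQ'Q hQP)
end

section
/- Theorem 3.5: Let (U, Δ, 𝒟) be a covering decision information system with Δ = (𝒞₁, …, 𝒞ₘ), let 𝒞ₘ⁺ be a refinement of 𝒞ₘ and Δ⁺ = (𝒞₁, …, 𝒞ₘ₋₁, 𝒞ₘ⁺). Assume ⋃𝒜_{𝒞ₘ} ⊆ ⋃𝒜_{𝒞ₘ⁺} and POS_{∪Δ⁺}(𝒟) = POS_{∪Δ}(𝒟). Then 𝓡(U,Δ⁺,𝒟) = ◊𝓡(U,Δ,𝒟) ∪ ▲𝓡(U,Δ,𝒟), where ◊𝓡(U,Δ,𝒟) = {P ∈ 𝓡(U,Δ,𝒟) : m ∉ P} and ▲𝓡(U,Δ,𝒟) is the set of all P ⊆ {1,…,m} such that m ∈ P, P is minimal among m-containing sets intersecting r(x) for every x ∈ POS_{∪Δ}(𝒟) \ ⋃𝒜_{𝒞ₘ⁺},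 and no member of 𝓡(U,Δ,𝒟) is a proper subset of P. -/
open Set

lemma exists_min_subset {α : Type*} [Finite α] (S : Set α → Prop) :
    ∀ Q : Set α, S Q → ∃ Q', Q' ⊆ Q ∧ S Q' ∧ ∀ R, R ⊂ Q' → ¬ S R := by
  intro Q
  induction Q using WellFoundedLT.induction with
  | _ Q ih =>
    intro hQ
    by_cases h : ∀ R, R ⊂ Q → ¬ S R
    · exact ⟨Q, subset_rfl, hQ, h⟩
    · push_neg at h
      obtain ⟨R, hR, hSR⟩ := h
      obtain ⟨Q', h1, h2, h3⟩ := ih R hR hSR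
      exact ⟨Q', h1.trans hR.subset, h2, h3⟩


/-- Theorem 3.5: assuming `⋃𝒜_{𝒞ₘ} ⊆ ⋃𝒜_{𝒞ₘ⁺}` and
`POS_{∪Δ⁺}(𝒟) = POS_{∪Δ}(𝒟)`, `𝓡(U,Δ⁺,𝒟) = ◊𝓡(U,Δ,𝒟) ∪ ▲𝓡(U,Δ,𝒟)`. -/
theorem stmt9 {U : Type*} [Finite U] [Nonempty U] {m : ℕ}
    (Δ : Fin (m + 1) → Set (Set U)) (𝒟 : Set (Set U))
    (hΔ : ∀ i, IsCovering (Δ i)) (h𝒟 : IsPartitionC 𝒟)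
    (Cp : Set (Set U)) (hCp : IsCovering Cp)
    (href : Refines Cp (Δ (Fin.last m)))
    (Δp : Fin (m + 1) → Set (Set U))
    (hΔp : Δp = Function.update Δ (Fin.last m) Cp)
    (hmono : ⋃₀ goodBlocks 𝒟 (Δ (Fin.last m)) ⊆ ⋃₀ goodBlocks 𝒟 Cp)
    (hpos : POS Δp 𝒟 = POS Δ 𝒟) :
    {P : Set (Fin (m + 1)) | IsReduct Δp 𝒟 P} =
      {P : Set (Fin (m + 1)) | IsReduct Δ 𝒟 P ∧ Fin.last m ∉ P} ∪
      {P : Set (Fin (m + 1)) |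
        (Fin.last m ∈ P ∧
          ∀ x ∈ POS Δ 𝒟 \ ⋃₀ goodBlocks 𝒟 Cp, (P ∩ relSet Δ 𝒟 x).Nonempty) ∧
        (∀ Q : Set (Fin (m + 1)), Q ⊂ P →
          ¬ (Fin.last m ∈ Q ∧
              ∀ x ∈ POS Δ 𝒟 \ ⋃₀ goodBlocks 𝒟 Cp, (Q ∩ relSet Δ 𝒟 x).Nonempty)) ∧
        (∀ Q : Set (Fin (m + 1)), IsReduct Δ 𝒟 Q → ¬ Q ⊂ P)} := by
  subst hΔp
  set L := Fin.last m with hL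
  set Δp := Function.update Δ L Cp with hΔp
  set A := ⋃₀ goodBlocks 𝒟 (Δ L) with hA
  set Ap := ⋃₀ goodBlocks 𝒟 Cp with hAp
  -- relSet agreement off L
  have hrel_ne : ∀ (x : U) (i : Fin (m+1)), i ≠ L →
      (i ∈ relSet Δp 𝒟 x ↔ i ∈ relSet Δ 𝒟 x) := by
    intro x i hi
    simp [relSet, Δp, Function.update_of_ne hi]
  have hrel_L : ∀ x : U, (L ∈ relSet Δp 𝒟 x ↔ x ∈ Ap) := by
    intro x
    simp only [relSet, Δp, Function.update_self, mem_setOf_eq, hAp, mem_sUnion,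
      goodBlocks, mem_sep_iff]
    tauto
  have hrel_LΔ : ∀ x : U, (L ∈ relSet Δ 𝒟 x ↔ x ∈ A) := by
    intro x
    simp only [relSet, mem_setOf_eq, hA, mem_sUnion, goodBlocks, mem_sep_iff]
    tauto
  -- relSets equal for x ∉ Ap
  have hrel_eq : ∀ x : U, x ∉ Ap → relSet Δp 𝒟 x = relSet Δ 𝒟 x := by
    intro x hx
    ext i
    by_cases hi : i = L
    · subst hi
      rw [hrel_L, hrel_LΔ]
      constructor
      · intro h; exact absurd h hx
      · intro h; exact absurd (hmono h) hx
    · exact hrel_ne x i hi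
  -- abbreviations for the covering conditions
  set S : Set (Fin (m+1)) → Prop :=
    fun P => ∀ x ∈ POS Δ 𝒟, (P ∩ relSet Δ 𝒟 x).Nonempty with hS
  set T : Set (Fin (m+1)) → Prop :=
    fun P => ∀ x ∈ POS Δ 𝒟 \ Ap, (P ∩ relSet Δ 𝒟 x).Nonempty with hT
  have hST : ∀ P, S P → T P := fun P h x hx => h x hx.1
  have hSp_not : ∀ P : Set (Fin (m+1)), L ∉ P →
      ((∀ x ∈ POS Δp 𝒟, (P ∩ relSet Δp 𝒟 x).Nonempty) ↔ S P) := by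
    intro P hLP
    rw [hpos]
    have : ∀ x, P ∩ relSet Δp 𝒟 x = P ∩ relSet Δ 𝒟 x := by
      intro x
      ext i
      have hi : i ∈ P → i ≠ L := fun h he => hLP (he ▸ h)
      constructor
      · rintro ⟨h1, h2⟩; exact ⟨h1, (hrel_ne x i (hi h1)).mp h2⟩
      · rintro ⟨h1, h2⟩; exact ⟨h1, (hrel_ne x i (hi h1)).mpr h2⟩
    simp only [this]
    exact Iff.rfl
  have hSp_mem : ∀ P : Set (Fin (m+1)), L ∈ P →
      ((∀ x ∈ POS Δp 𝒟, (P ∩ relSet Δp 𝒟 x).Nonempty) ↔ T P) := by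
    intro P hLP
    rw [hpos]
    constructor
    · intro h x hx
      have := h x hx.1
      rwa [hrel_eq x hx.2] at this
    · intro h x hx
      by_cases hxA : x ∈ Ap
      · exact ⟨L, hLP, (hrel_L x).mpr hxA⟩
      · rw [hrel_eq x hxA]
        exact h x ⟨hx, hxA⟩
  -- reduct characterization
  have hreduct : ∀ P, IsReduct Δ 𝒟 P ↔ S P ∧ ∀ Q, Q ⊂ P → ¬ S Q := fun P => Iff.rfl
  ext P
  simp only [mem_setOf_eq, mem_union]
  by_cases hLP : L ∈ P
  · constructor
    · rintro ⟨h1, h2⟩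
      refine Or.inr ⟨⟨hLP, (hSp_mem P hLP).mp h1⟩, ?_, ?_⟩
      · rintro Q hQ ⟨hLQ, hTQ⟩
        exact h2 Q hQ ((hSp_mem Q hLQ).mpr hTQ)
      · intro Q hQred hQP
        by_cases hLQ : L ∈ Q
        · exact h2 Q hQP ((hSp_mem Q hLQ).mpr (hST Q hQred.1))
        · exact h2 Q hQP ((hSp_not Q hLQ).mpr hQred.1)
    · rintro (⟨_, hnL⟩ | ⟨⟨_, hTP⟩, hmin, hnored⟩)
      · exact absurd hLP hnL
      refine ⟨(hSp_mem P hLP).mpr hTP, ?_⟩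
      intro Q hQP hSpQ
      by_cases hLQ : L ∈ Q
      · exact hmin Q hQP ⟨hLQ, (hSp_mem Q hLQ).mp hSpQ⟩
      · have hSQ : S Q := (hSp_not Q hLQ).mp hSpQ
        obtain ⟨Q', hQ'Q, hSQ', hminQ'⟩ := exists_min_subset S Q hSQ
        exact hnored Q' ⟨hSQ', hminQ'⟩ (lt_of_le_of_lt hQ'Q hQP)
  · constructor
    · rintro ⟨h1, h2⟩
      refine Or.inl ⟨⟨(hSp_not P hLP).mp h1, ?_⟩, hLP⟩
      intro Q hQP hSQ
      have hLQ : L ∉ Q := fun h => hLP (hQP.subset h)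
      exact h2 Q hQP ((hSp_not Q hLQ).mpr hSQ)
    · rintro (⟨⟨h1, h2⟩, _⟩ | ⟨⟨hLP', _⟩, _, _⟩)
      · refine ⟨(hSp_not P hLP).mpr h1, ?_⟩
        intro Q hQP hSpQ
        have hLQ : L ∉ Q := fun h => hLP (hQP.subset h)
        exact h2 Q hQP ((hSp_not Q hLQ).mp hSpQ)
      · exact absurd hLP' hLP
end

section
/- Theorem 3.6: Let (U, Δ, 𝒟) be a covering decision information system with Δ = (𝒞₁, …, 𝒞ₘ), let 𝒞ₘ⁺ be a refinement of 𝒞ₘ and Δ⁺ = (𝒞₁, …, 𝒞ₘ₋₁, 𝒞ₘ⁺). Assume ⋃𝒜_{𝒞ₘ} ⊆ ⋃𝒜_{𝒞ₘ⁺} and POS_{∪Δ⁺}(𝒟) ≠ POS_{∪Δ}(𝒟). Then 𝓡(U,Δ⁺,𝒟) equals the set of all P ⊆ {1,…,m} such that m ∈ P and P is minimal among m-containing sets Q with Q ∩ r(x) ≠ ∅ for every x ∈ POS_{∪Δ}(𝒟) \ ⋃𝒜_{𝒞ₘ⁺}. -/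
open Set

/-- Theorem 3.6: assuming `⋃𝒜_{𝒞ₘ} ⊆ ⋃𝒜_{𝒞ₘ⁺}` and
`POS_{∪Δ⁺}(𝒟) ≠ POS_{∪Δ}(𝒟)`, the reducts of `(U, Δ⁺, 𝒟)` are exactly the `m`-containing
sets minimal among `m`-containing sets `Q` with `Q ∩ r(x) ≠ ∅` for every
`x ∈ POS_{∪Δ}(𝒟) \ ⋃𝒜_{𝒞ₘ⁺}`. -/
theorem stmt10 {U : Type*} [Finite U] [Nonempty U] {m : ℕ}
    (Δ : Fin (m + 1) → Set (Set U)) (𝒟 : Set (Set U))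
    (hΔ : ∀ i, IsCovering (Δ i)) (h𝒟 : IsPartitionC 𝒟)
    (Cp : Set (Set U)) (hCp : IsCovering Cp)
    (href : Refines Cp (Δ (Fin.last m)))
    (Δp : Fin (m + 1) → Set (Set U))
    (hΔp : Δp = Function.update Δ (Fin.last m) Cp)
    (hmono : ⋃₀ goodBlocks 𝒟 (Δ (Fin.last m)) ⊆ ⋃₀ goodBlocks 𝒟 Cp)
    (hne : POS Δp 𝒟 ≠ POS Δ 𝒟) :
    {P : Set (Fin (m + 1)) | IsReduct Δp 𝒟 P} =
      {P : Set (Fin (m + 1)) |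
        (Fin.last m ∈ P ∧
          ∀ x ∈ POS Δ 𝒟 \ ⋃₀ goodBlocks 𝒟 Cp, (P ∩ relSet Δ 𝒟 x).Nonempty) ∧
        (∀ Q : Set (Fin (m + 1)), Q ⊂ P →
          ¬ (Fin.last m ∈ Q ∧
              ∀ x ∈ POS Δ 𝒟 \ ⋃₀ goodBlocks 𝒟 Cp, (Q ∩ relSet Δ 𝒟 x).Nonempty))} := by
  have memPOS : ∀ (Δ' : Fin (m+1) → Set (Set U)) (x : U),
      x ∈ POS Δ' 𝒟 ↔ ∃ i, i ∈ relSet Δ' 𝒟 x := by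
    intro Δ' x
    simp only [POS, relSet, mem_iUnion, mem_sUnion, mem_setOf_eq]
    constructor
    · rintro ⟨D, hD, K, ⟨⟨i, hK⟩, hKD⟩, hx⟩
      exact ⟨i, K, hK, hx, D, hD, hKD⟩
    · rintro ⟨i, C, hC, hx, D, hD, hCD⟩
      exact ⟨D, hD, C, ⟨⟨i, hC⟩, hCD⟩, hx⟩
  have memG : ∀ (𝒞 : Set (Set U)) (x : U),
      x ∈ ⋃₀ goodBlocks 𝒟 𝒞 ↔ ∃ C ∈ 𝒞, x ∈ C ∧ ∃ D ∈ 𝒟, C ⊆ D := by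
    intro 𝒞 x
    simp only [goodBlocks, mem_sUnion, mem_setOf_eq]
    tauto
  have hΔpl : Δp (Fin.last m) = Cp := by rw [hΔp]; exact Function.update_self _ _ _
  have hΔpi : ∀ i, i ≠ Fin.last m → Δp i = Δ i := by
    intro i hi; rw [hΔp]; exact Function.update_of_ne hi _ _
  have hrel_ne : ∀ (i : Fin (m+1)) (x : U), i ≠ Fin.last m →
      (i ∈ relSet Δp 𝒟 x ↔ i ∈ relSet Δ 𝒟 x) := by
    intro i x hi; simp only [relSet, mem_setOf_eq, hΔpi i hi]
  have hrel_lastp : ∀ x : U, Fin.last m ∈ relSet Δp 𝒟 x ↔ x ∈ ⋃₀ goodBlocks 𝒟 Cp := by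
    intro x; rw [memG]; simp only [relSet, mem_setOf_eq, hΔpl]
  have hrel_last : ∀ x : U,
      Fin.last m ∈ relSet Δ 𝒟 x ↔ x ∈ ⋃₀ goodBlocks 𝒟 (Δ (Fin.last m)) := by
    intro x; rw [memG]; simp only [relSet, mem_setOf_eq]
  have hPOSsub : POS Δ 𝒟 ⊆ POS Δp 𝒟 := by
    intro x hx
    rw [memPOS] at hx ⊢
    obtain ⟨i, hi⟩ := hx
    by_cases h : i = Fin.last m
    · subst h
      rw [hrel_last] at hi
      exact ⟨Fin.last m, (hrel_lastp x).2 (hmono hi)⟩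
    · exact ⟨i, (hrel_ne i x h).2 hi⟩
  obtain ⟨x₀, hx₀p, hx₀⟩ : ∃ x₀, x₀ ∈ POS Δp 𝒟 ∧ x₀ ∉ POS Δ 𝒟 := by
    by_contra h
    push_neg at h
    exact hne (Subset.antisymm h hPOSsub)
  have hx₀rel : ∀ i, i ∈ relSet Δp 𝒟 x₀ → i = Fin.last m := by
    intro i hi
    by_contra h
    exact hx₀ ((memPOS Δ x₀).2 ⟨i, (hrel_ne i x₀ h).1 hi⟩)
  have hrel_eq : ∀ x : U, x ∉ ⋃₀ goodBlocks 𝒟 Cp →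
      relSet Δp 𝒟 x = relSet Δ 𝒟 x := by
    intro x hx
    ext i
    by_cases h : i = Fin.last m
    · subst h
      rw [hrel_lastp, hrel_last]
      exact ⟨fun h' => absurd h' hx, fun h' => absurd (hmono h') hx⟩
    · exact hrel_ne i x h
  have key : ∀ P : Set (Fin (m+1)),
      (∀ x ∈ POS Δp 𝒟, (P ∩ relSet Δp 𝒟 x).Nonempty) ↔
      (Fin.last m ∈ P ∧
        ∀ x ∈ POS Δ 𝒟 \ ⋃₀ goodBlocks 𝒟 Cp, (P ∩ relSet Δ 𝒟 x).Nonempty) := by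
    intro P
    constructor
    · intro h
      constructor
      · obtain ⟨i, hiP, hirel⟩ := h x₀ hx₀p
        rwa [hx₀rel i hirel] at hiP
      · rintro x ⟨hx1, hx2⟩
        rw [← hrel_eq x hx2]
        exact h x (hPOSsub hx1)
    · rintro ⟨hlP, h⟩ x hx
      by_cases hb : x ∈ ⋃₀ goodBlocks 𝒟 Cp
      · exact ⟨Fin.last m, hlP, (hrel_lastp x).2 hb⟩
      · rw [hrel_eq x hb]
        apply h
        refine ⟨?_, hb⟩
        rw [memPOS] at hx ⊢
        obtain ⟨i, hi⟩ := hx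
        have hne' : i ≠ Fin.last m := by
          intro h'; subst h'; exact hb ((hrel_lastp x).1 hi)
        exact ⟨i, (hrel_ne i x hne').1 hi⟩
  ext P
  simp only [mem_setOf_eq, IsReduct]
  constructor
  · rintro ⟨h1, h2⟩
    exact ⟨(key P).1 h1, fun Q hQ hQ' => h2 Q hQ ((key Q).2 hQ')⟩
  · rintro ⟨h1, h2⟩
    exact ⟨(key P).2 h1, fun Q hQ hQ' => h2 Q hQ ((key Q).1 hQ')⟩
end

section
/- Let (U, Δ, 𝒟) be a covering decision information system with Δ = (𝒞₁, …, 𝒞ₘ), let 𝒞ₘ⁻ be a coarsening of 𝒞ₘ and Δ⁻ = (𝒞₁, …, 𝒞ₘ₋₁, 𝒞ₘ⁻). Assume POS_{∪Δ⁻}(𝒟) = POS_{∪Δ}(𝒟). Then for every P ⊆ {1,…,m} with m ∉ P: P is a reduct of (U, Δ⁻, 𝒟) if and only if P is a reduct of (U, Δ, 𝒟). (The ◊𝓡 part of Theorem 4.4.) -/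
open Set

/-- the ◊𝓡 part of Theorem 4.4: assuming `POS_{∪Δ⁻}(𝒟) = POS_{∪Δ}(𝒟)`,
for `P` with `m ∉ P`: `P` is a reduct of `(U, Δ⁻, 𝒟)` iff `P` is a reduct of `(U, Δ, 𝒟)`. -/
theorem stmt14 {U : Type*} [Finite U] [Nonempty U] {m : ℕ}
    (Δ : Fin (m + 1) → Set (Set U)) (𝒟 : Set (Set U))
    (hΔ : ∀ i, IsCovering (Δ i)) (h𝒟 : IsPartitionC 𝒟)
    (Cm : Set (Set U)) (hCm : IsCovering Cm)
    (hcoar : Refines (Δ (Fin.last m)) Cm)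
    (Δm : Fin (m + 1) → Set (Set U))
    (hΔm : Δm = Function.update Δ (Fin.last m) Cm)
    (hpos : POS Δm 𝒟 = POS Δ 𝒟) :
    ∀ P : Set (Fin (m + 1)), Fin.last m ∉ P →
      (IsReduct Δm 𝒟 P ↔ IsReduct Δ 𝒟 P) := by
  intro P hP
  have hag : ∀ S : Set (Fin (m + 1)), Fin.last m ∉ S → ∀ x,
      S ∩ relSet Δm 𝒟 x = S ∩ relSet Δ 𝒟 x := by
    intro S hS x
    ext i
    simp only [Set.mem_inter_iff, relSet, Set.mem_setOf_eq]
    constructor <;> rintro ⟨hiS, h⟩ <;> refine ⟨hiS, ?_⟩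
    · rwa [hΔm, Function.update_of_ne (fun hlast => hS (by rw [← hlast]; exact hiS))] at h
    · rwa [hΔm, Function.update_of_ne (fun hlast => hS (by rw [← hlast]; exact hiS))]
  unfold IsReduct
  rw [hpos]
  constructor <;> rintro ⟨h1, h2⟩ <;> constructor
  · intro x hx; rw [← hag P hP x]; exact h1 x hx
  · intro Q hQ hc
    exact h2 Q hQ (fun x hx => (hag Q (fun h => hP (hQ.1 h)) x) ▸ hc x hx)
  · intro x hx; rw [hag P hP x]; exact h1 x hx
  · intro Q hQ hc
    exact h2 Q hQ (fun x hx => (hag Q (fun h => hP (hQ.1 h)) x).symm ▸ hc x hx)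
end

section
/- Theorem 4.4 (updating reducts when coarsening preserves the positive region): Let (U, Δ, 𝒟) be a covering decision information system with Δ = (𝒞₁, …, 𝒞ₘ), let 𝒞ₘ⁻ be a coarsening of 𝒞ₘ and Δ⁻ = (𝒞₁, …, 𝒞ₘ₋₁, 𝒞ₘ⁻). Assume POS_{∪Δ⁻}(𝒟) = POS_{∪Δ}(𝒟). Then 𝓡(U,Δ⁻,𝒟) = ◊𝓡(U,Δ,𝒟) ∪ ▲𝓡, where ◊𝓡(U,Δ,𝒟) = {P ∈ 𝓡(U,Δ,𝒟) : m ∉ P} and ▲𝓡 is the set of all P ⊆ {1,…,m} such that m ∈ P, P is minimal among m-containing sets intersecting r⁻(x) for every x ∈ POS_{∪Δ}(𝒟) \ ⋃𝒜_{𝒞ₘ⁻}, and no member of 𝓡(U,Δ,𝒟) avoiding m is a proper subset of P. -/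
open Set

/-- Any set with a property can be shrunk to a minimal subset with that property
(over a finite type). -/
lemma exists_minimal_subset {α : Type*} [Finite α] (φ : Set α → Prop) (Q : Set α)
    (hQ : φ Q) : ∃ Q', Q' ⊆ Q ∧ φ Q' ∧ ∀ R, R ⊂ Q' → ¬ φ R := by
  have : Finite (Set α) := inferInstance
  have hwf : WellFounded ((· < ·) : Set α → Set α → Prop) :=
    Finite.to_wellFoundedLT.wf
  obtain ⟨Q', ⟨hsub, hφ⟩, hmin⟩ :=
    hwf.has_min {R | R ⊆ Q ∧ φ R} ⟨Q, le_refl _, hQ⟩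
  exact ⟨Q', hsub, hφ, fun R hR hφR => hmin R ⟨hR.1.trans hsub, hφR⟩ hR⟩

/-- Theorem 4.4: assuming `POS_{∪Δ⁻}(𝒟) = POS_{∪Δ}(𝒟)`,
`𝓡(U,Δ⁻,𝒟) = ◊𝓡(U,Δ,𝒟) ∪ ▲𝓡`, where `◊𝓡(U,Δ,𝒟) = {P ∈ 𝓡(U,Δ,𝒟) : m ∉ P}` and `▲𝓡`
consists of the `P` with `m ∈ P`, minimal among `m`-containing sets intersecting `r⁻(x)`
for every `x ∈ POS_{∪Δ}(𝒟) \ ⋃𝒜_{𝒞ₘ⁻}`, such that no member of `𝓡(U,Δ,𝒟)` avoiding `m`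
is a proper subset of `P`. -/


theorem stmt15 {U : Type*} [Finite U] [Nonempty U] {m : ℕ}
    (Δ : Fin (m + 1) → Set (Set U)) (𝒟 : Set (Set U))
    (hΔ : ∀ i, IsCovering (Δ i)) (h𝒟 : IsPartitionC 𝒟)
    (Cm : Set (Set U)) (hCm : IsCovering Cm)
    (hcoar : Refines (Δ (Fin.last m)) Cm)
    (Δm : Fin (m + 1) → Set (Set U))
    (hΔm : Δm = Function.update Δ (Fin.last m) Cm)
    (hpos : POS Δm 𝒟 = POS Δ 𝒟) :
    {P : Set (Fin (m + 1)) | IsReduct Δm 𝒟 P} =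
      {P : Set (Fin (m + 1)) | IsReduct Δ 𝒟 P ∧ Fin.last m ∉ P} ∪
      {P : Set (Fin (m + 1)) |
        (Fin.last m ∈ P ∧
          ∀ x ∈ POS Δ 𝒟 \ ⋃₀ goodBlocks 𝒟 Cm, (P ∩ relSet Δm 𝒟 x).Nonempty) ∧
        (∀ Q : Set (Fin (m + 1)), Q ⊂ P →
          ¬ (Fin.last m ∈ Q ∧
              ∀ x ∈ POS Δ 𝒟 \ ⋃₀ goodBlocks 𝒟 Cm, (Q ∩ relSet Δm 𝒟 x).Nonempty)) ∧
        (∀ Q : Set (Fin (m + 1)), IsReduct Δ 𝒟 Q → Fin.last m ∉ Q → ¬ Q ⊂ P)} := by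
  have hne : ∀ i : Fin (m + 1), i ≠ Fin.last m → Δm i = Δ i := by
    intro i hi; rw [hΔm, Function.update_of_ne hi]
  have hlast : Δm (Fin.last m) = Cm := by rw [hΔm, Function.update_self]
  have hrel : ∀ (x : U) (i : Fin (m + 1)), i ≠ Fin.last m →
      (i ∈ relSet Δm 𝒟 x ↔ i ∈ relSet Δ 𝒟 x) := by
    intro x i hi
    simp only [relSet, mem_setOf_eq, hne i hi]
  have hrellast : ∀ x : U,
      (Fin.last m ∈ relSet Δm 𝒟 x ↔ x ∈ ⋃₀ goodBlocks 𝒟 Cm) := by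
    intro x
    simp only [relSet, mem_setOf_eq, hlast, goodBlocks, Set.mem_sUnion, mem_setOf_eq]
    constructor
    · rintro ⟨C, h1, h2, h3⟩; exact ⟨C, ⟨h1, h3⟩, h2⟩
    · rintro ⟨C, ⟨h1, h3⟩, h2⟩; exact ⟨C, h1, h2, h3⟩
  have htrans : ∀ Q : Set (Fin (m + 1)), Fin.last m ∉ Q →
      ∀ x : U, ((Q ∩ relSet Δm 𝒟 x).Nonempty ↔ (Q ∩ relSet Δ 𝒟 x).Nonempty) := by
    intro Q hQ x
    constructor
    · rintro ⟨i, hiQ, hir⟩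
      exact ⟨i, hiQ, (hrel x i (fun h => hQ (h ▸ hiQ))).mp hir⟩
    · rintro ⟨i, hiQ, hir⟩
      exact ⟨i, hiQ, (hrel x i (fun h => hQ (h ▸ hiQ))).mpr hir⟩
  ext P
  simp only [Set.mem_setOf_eq, Set.mem_union, IsReduct, hpos]
  constructor
  · rintro ⟨hcov, hmin⟩
    by_cases hlastP : Fin.last m ∈ P
    · right
      refine ⟨⟨hlastP, fun x hx => hcov x hx.1⟩, ?_, ?_⟩
      · rintro Q hQP ⟨hQl, hQcov⟩
        apply hmin Q hQP
        intro x hx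
        by_cases hxG : x ∈ ⋃₀ goodBlocks 𝒟 Cm
        · exact ⟨Fin.last m, hQl, (hrellast x).mpr hxG⟩
        · exact hQcov x ⟨hx, hxG⟩
      · rintro Q ⟨hQcov, _⟩ hQl hQP
        apply hmin Q hQP
        intro x hx
        exact (htrans Q hQl x).mpr (hQcov x hx)
    · left
      refine ⟨⟨fun x hx => (htrans P hlastP x).mp (hcov x hx), ?_⟩, hlastP⟩
      intro Q hQP hQcov
      apply hmin Q hQP
      have hQl : Fin.last m ∉ Q := fun h => hlastP (hQP.1 h)
      intro x hx
      exact (htrans Q hQl x).mpr (hQcov x hx)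
  · rintro (⟨⟨hcov, hmin⟩, hlastP⟩ | ⟨⟨hlastP, hcovG⟩, hminG, hnored⟩)
    · refine ⟨fun x hx => (htrans P hlastP x).mpr (hcov x hx), ?_⟩
      intro Q hQP hQcov
      apply hmin Q hQP
      have hQl : Fin.last m ∉ Q := fun h => hlastP (hQP.1 h)
      intro x hx
      exact (htrans Q hQl x).mp (hQcov x hx)
    · have hPcov : ∀ x ∈ POS Δ 𝒟, (P ∩ relSet Δm 𝒟 x).Nonempty := by
        intro x hx
        by_cases hxG : x ∈ ⋃₀ goodBlocks 𝒟 Cm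
        · exact ⟨Fin.last m, hlastP, (hrellast x).mpr hxG⟩
        · exact hcovG x ⟨hx, hxG⟩
      refine ⟨hPcov, ?_⟩
      intro Q hQP hQcov
      by_cases hQl : Fin.last m ∈ Q
      · exact hminG Q hQP ⟨hQl, fun x hx => hQcov x hx.1⟩
      · have hQcov' : ∀ x ∈ POS Δ 𝒟, (Q ∩ relSet Δ 𝒟 x).Nonempty :=
          fun x hx => (htrans Q hQl x).mp (hQcov x hx)
        obtain ⟨Q', hQ'sub, hQ'cov, hQ'min⟩ := exists_minimal_subset
          (fun R => ∀ x ∈ POS Δ 𝒟, (R ∩ relSet Δ 𝒟 x).Nonempty) Q hQcov'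
        have hQ'l : Fin.last m ∉ Q' := fun h => hQl (hQ'sub h)
        exact hnored Q' ⟨hQ'cov, hQ'min⟩ hQ'l (lt_of_le_of_lt hQ'sub hQP)
end

section
/- Theorem 4.5: Let (U, Δ, 𝒟) be a covering decision information system with Δ = (𝒞₁, …, 𝒞ₘ), let 𝒞ₘ⁻ be a coarsening of 𝒞ₘ and Δ⁻ = (𝒞₁, …, 𝒞ₘ₋₁, 𝒞ₘ⁻). If POS_{∪Δ}(𝒟) ≠ POS_{∪Δ⁻}(𝒟), then for every x ∈ POS_{∪Δ}(𝒟) \ POS_{∪Δ⁻}(𝒟) one has r(x) = {m} and r⁻(x) = ∅. -/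
open Set

/-- Theorem 4.5: if `POS_{∪Δ}(𝒟) ≠ POS_{∪Δ⁻}(𝒟)`, then for every
`x ∈ POS_{∪Δ}(𝒟) \ POS_{∪Δ⁻}(𝒟)` one has `r(x) = {m}` and `r⁻(x) = ∅`. -/
theorem stmt16 {U : Type*} [Finite U] [Nonempty U] {m : ℕ}
    (Δ : Fin (m + 1) → Set (Set U)) (𝒟 : Set (Set U))
    (hΔ : ∀ i, IsCovering (Δ i)) (h𝒟 : IsPartitionC 𝒟)
    (Cm : Set (Set U)) (hCm : IsCovering Cm)
    (hcoar : Refines (Δ (Fin.last m)) Cm)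
    (Δm : Fin (m + 1) → Set (Set U))
    (hΔm : Δm = Function.update Δ (Fin.last m) Cm)
    (hne : POS Δ 𝒟 ≠ POS Δm 𝒟) :
    ∀ x ∈ POS Δ 𝒟 \ POS Δm 𝒟,
      relSet Δ 𝒟 x = {Fin.last m} ∧ relSet Δm 𝒟 x = ∅ := by
  have key : ∀ (Δ' : Fin (m+1) → Set (Set U)) (x : U),
      x ∈ POS Δ' 𝒟 ↔ (relSet Δ' 𝒟 x).Nonempty := by
    intro Δ' x
    constructor
    · rintro hx
      simp only [POS, Set.mem_iUnion, Set.mem_sUnion] at hx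
      obtain ⟨D, hD, K, ⟨⟨i, hKi⟩, hKD⟩, hxK⟩ := hx
      exact ⟨i, K, hKi, hxK, D, hD, hKD⟩
    · rintro ⟨i, C, hC, hxC, D, hD, hCD⟩
      simp only [POS, Set.mem_iUnion, Set.mem_sUnion]
      exact ⟨D, hD, C, ⟨⟨i, hC⟩, hCD⟩, hxC⟩
  rintro x ⟨hx, hx'⟩
  have hempty : relSet Δm 𝒟 x = ∅ := by
    rw [Set.eq_empty_iff_forall_notMem]
    intro i hi
    exact hx' ((key Δm x).2 ⟨i, hi⟩)
  refine ⟨?_, hempty⟩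
  have honly : ∀ i, i ∈ relSet Δ 𝒟 x → i = Fin.last m := by
    intro i hi
    by_contra hne'
    obtain ⟨C, hC, hxC, D, hD, hCD⟩ := hi
    have : i ∈ relSet Δm 𝒟 x := by
      refine ⟨C, ?_, hxC, D, hD, hCD⟩
      rw [hΔm, Function.update_of_ne hne']
      exact hC
    rw [hempty] at this
    exact this
  obtain ⟨i, hi⟩ := (key Δ x).1 hx
  have := honly i hi
  subst this
  apply Set.eq_singleton_iff_unique_mem.2 ⟨hi, honly⟩
end
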